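/- In the convex setting (CP), let x* ∈ 𝒳 be an optimal solution (c_i(x*) ≤ 0 for all i and F(x*) ≤ F(z) for every feasible z). Let x ∈ 𝒳 be feasible and let z* ∈ 𝒳, μ ∈ ℝ^m_{≥0}, l ∈ ∂r(z*) satisfy the GHMA subproblem KKT conditions at x, with d = z* − x. Then: (a) F(z*) − F(x*) ≤ ((L + Σ_{i=1}^m μ_i L_i)/2)·‖d‖^{κ−1}·( ((1−κ)/(1+κ))·‖d‖² + ‖x − x*‖² − ‖z* − x*‖² ); and (b) if C₁ > 0 satisfies ‖x − x*‖ ≤ C₁ and ‖z* − x*‖ ≤ C₁, then F(z*) − F(x*) ≤ (L + Σ_{i=1}^m μ_i L_i)·C₁·‖d‖^κ. -/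

import Mathlib

open scoped RealInnerProductSpace
open Real Set

/-- The convex subdifferential of `r` at `u`. -/
def subgrad {n : ℕ} (r : EuclideanSpace ℝ (Fin n) → ℝ)
    (u : EuclideanSpace ℝ (Fin n)) : Set (EuclideanSpace ℝ (Fin n)) :=
  {l | ∀ z, r u + ⟪l, z - u⟫ ≤ r z}


variable {n : ℕ}

lemma line_hasDerivAt {f : EuclideanSpace ℝ (Fin n) → ℝ} {g x v : EuclideanSpace ℝ (Fin n)}
    {t : ℝ} (hf : HasGradientAt f g (x + t • v)) :
    HasDerivAt (fun s : ℝ => f (x + s • v)) ⟪g, v⟫ t := by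
  have h1 : HasDerivAt (fun s : ℝ => x + s • v) v t := by
    simpa using ((hasDerivAt_id t).smul_const v).const_add x
  have h2 := (hf.hasFDerivAt).comp_hasDerivAt t h1
  have h3 : HasDerivAt (f ∘ fun s : ℝ => x + s • v) ⟪g, v⟫ t := by simpa using h2
  exact h3

lemma convex_grad_ineq {f : EuclideanSpace ℝ (Fin n) → ℝ} {f'x x y : EuclideanSpace ℝ (Fin n)}
    (hconv : ConvexOn ℝ univ f) (hf : HasGradientAt f f'x x) :
    f x + ⟪f'x, y - x⟫ ≤ f y := by
  have hd : HasDerivAt (fun s : ℝ => f (x + s • (y - x))) ⟪f'x, y - x⟫ 0 :=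
    line_hasDerivAt (by simpa using hf)
  have hslope := hasDerivAt_iff_tendsto_slope.mp hd
  have hmono : Filter.Tendsto (slope (fun s : ℝ => f (x + s • (y - x))) 0) (nhdsWithin 0 (Ioi 0))
      (nhds ⟪f'x, y - x⟫) :=
    hslope.mono_left (nhdsWithin_mono _ (fun t ht => ne_of_gt ht))
  have hb : ∀ᶠ t in nhdsWithin (0:ℝ) (Ioi 0),
      slope (fun s : ℝ => f (x + s • (y - x))) 0 t ≤ f y - f x := by
    filter_upwards [Ioo_mem_nhdsGT_of_mem (by norm_num : (0:ℝ) ∈ Ico 0 1)] with t ht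
    have h0 : x + t • (y - x) = (1 - t) • x + t • y := by
      rw [smul_sub, sub_smul, one_smul]; abel
    have hc := hconv.2 (mem_univ x) (mem_univ y)
      (by linarith [ht.2] : (0:ℝ) ≤ 1 - t) (le_of_lt ht.1) (by ring)
    rw [slope_def_field]
    rw [div_le_iff₀ (by simpa using ht.1)]
    have : f (x + t • (y - x)) ≤ (1 - t) * f x + t * f y := by rw [h0]; simpa using hc
    simp only [smul_eq_mul, zero_smul, add_zero] at this ⊢
    nlinarith
  have := le_of_tendsto hmono hb
  linarith

lemma holder_descent {f : EuclideanSpace ℝ (Fin n) → ℝ}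
    {f' : EuclideanSpace ℝ (Fin n) → EuclideanSpace ℝ (Fin n)} {κ L : ℝ}
    (hf : ∀ z, HasGradientAt f (f' z) z) (hκ0 : 0 < κ) (hL : 0 ≤ L)
    (hholder : ∀ a b, ‖f' a - f' b‖ ≤ L * ‖a - b‖ ^ κ)
    (x y : EuclideanSpace ℝ (Fin n)) :
    f y ≤ f x + ⟪f' x, y - x⟫ + L / (κ + 1) * ‖y - x‖ ^ (κ + 1) := by
  set v := y - x with hv
  by_cases hv0 : v = 0
  · have hxy : y = x := by
      have := sub_eq_zero.mp (hv ▸ hv0)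
      exact this
    subst hxy
    rw [hv0, inner_zero_right, norm_zero, Real.zero_rpow (by positivity : κ + 1 ≠ 0)]
    simp
  have hvpos : (0:ℝ) < ‖v‖ := norm_pos_iff.mpr hv0
  set h : ℝ → ℝ := fun t => f (x + t • v) - t * ⟪f' x, v⟫ - L / (κ + 1) * ‖v‖ ^ (κ + 1) * t ^ (κ + 1)
    with hh
  have hgrad : ∀ t : ℝ, HasDerivAt (fun s : ℝ => f (x + s • v)) ⟪f' (x + t • v), v⟫ t :=
    fun t => line_hasDerivAt (hf _)
  have hderiv : ∀ t ∈ Ioo (0:ℝ) 1, HasDerivAt h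
      (⟪f' (x + t • v), v⟫ - ⟪f' x, v⟫ - L / (κ + 1) * ‖v‖ ^ (κ + 1) * ((κ + 1) * t ^ κ)) t := by
    intro t ht
    have h1 := (hgrad t).sub ((hasDerivAt_id t).mul_const (⟪f' x, v⟫))
    have h2 : HasDerivAt (fun s : ℝ => L / (κ + 1) * ‖v‖ ^ (κ + 1) * s ^ (κ + 1))
        (L / (κ + 1) * ‖v‖ ^ (κ + 1) * ((κ + 1) * t ^ κ)) t := by
      have := (Real.hasDerivAt_rpow_const (x := t) (p := κ + 1) (Or.inl (ne_of_gt ht.1))).const_mul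
        (L / (κ + 1) * ‖v‖ ^ (κ + 1))
      simpa using this
    have h3 := h1.sub h2
    rw [one_mul] at h3
    exact h3
  have hcont : ContinuousOn h (Icc (0:ℝ) 1) := by
    have hdiff : Differentiable ℝ f := fun z => ((hf z).hasFDerivAt).differentiableAt
    have hfc : Continuous fun t : ℝ => f (x + t • v) :=
      hdiff.continuous.comp (by continuity)
    apply ContinuousOn.sub
    · exact (hfc.sub (continuous_id.mul continuous_const)).continuousOn
    · apply ContinuousOn.mul continuousOn_const
      intro t ht
      exact (Real.continuousAt_rpow_const t (κ + 1) (Or.inr (by linarith))).continuousWithinAt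
  have hanti : AntitoneOn h (Icc (0:ℝ) 1) := by
    apply antitoneOn_of_deriv_nonpos (convex_Icc 0 1) hcont
    · intro t ht
      rw [interior_Icc] at ht
      exact (hderiv t ht).differentiableAt.differentiableWithinAt
    · intro t ht
      rw [interior_Icc] at ht
      rw [(hderiv t ht).deriv]
      have hb : ⟪f' (x + t • v) - f' x, v⟫ ≤ L * t ^ κ * ‖v‖ ^ (κ + 1) := by
        calc ⟪f' (x + t • v) - f' x, v⟫ ≤ ‖f' (x + t • v) - f' x‖ * ‖v‖ :=
              real_inner_le_norm _ _
          _ ≤ L * ‖(x + t • v) - x‖ ^ κ * ‖v‖ :=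
              mul_le_mul_of_nonneg_right (hholder _ _) (norm_nonneg _)
          _ = L * t ^ κ * ‖v‖ ^ (κ + 1) := by
              rw [add_sub_cancel_left, norm_smul, Real.norm_eq_abs, abs_of_pos ht.1,
                Real.mul_rpow (le_of_lt ht.1) (norm_nonneg _),
                Real.rpow_add_one (ne_of_gt hvpos)]
              ring
      rw [inner_sub_left] at hb
      have hc : L / (κ + 1) * ‖v‖ ^ (κ + 1) * ((κ + 1) * t ^ κ) = L * t ^ κ * ‖v‖ ^ (κ + 1) := by
        field_simp
      linarith
  have := hanti (by norm_num : (0:ℝ) ∈ Icc 0 1) (by norm_num : (1:ℝ) ∈ Icc 0 1) zero_le_one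
  simp only [hh, zero_smul, add_zero, one_smul, zero_mul, Real.one_rpow, mul_one,
    Real.zero_rpow (by positivity : κ + 1 ≠ 0), mul_zero, sub_zero] at this
  have hxv : x + v = y := by rw [hv]; abel
  rw [hxv] at this
  linarith

/-- (Lemma 3 in the paper: optimality-gap bounds for GHMA in the
convex setting.)  With `d = z* − x` and `x*` an optimal solution,
(a) `F(z*) − F(x*) ≤ ((L + Σμᵢ Lᵢ)/2)‖d‖^{κ−1}(((1−κ)/(1+κ))‖d‖² + ‖x − x*‖² − ‖z* − x*‖²)`,
(b) if `‖x − x*‖ ≤ C₁` and `‖z* − x*‖ ≤ C₁` then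
`F(z*) − F(x*) ≤ (L + Σμᵢ Lᵢ)C₁‖d‖^κ`. -/
theorem ghma_optimality_gap {n m : ℕ}
    (X : Set (EuclideanSpace ℝ (Fin n))) (hXconv : Convex ℝ X) (hXclosed : IsClosed X)
    (f r : EuclideanSpace ℝ (Fin n) → ℝ)
    (c : Fin m → EuclideanSpace ℝ (Fin n) → ℝ)
    (f' : EuclideanSpace ℝ (Fin n) → EuclideanSpace ℝ (Fin n))
    (c' : Fin m → EuclideanSpace ℝ (Fin n) → EuclideanSpace ℝ (Fin n))
    (hf : ∀ x, HasGradientAt f (f' x) x)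
    (hc : ∀ i x, HasGradientAt (c i) (c' i x) x)
    (hfconv : ConvexOn ℝ univ f) (hcconv : ∀ i, ConvexOn ℝ univ (c i))
    (hrconv : ConvexOn ℝ univ r)
    (κ L : ℝ) (Li : Fin m → ℝ)
    (hκ0 : 0 < κ) (hκ1 : κ ≤ 1) (hL : 0 < L) (hLi : ∀ i, 0 < Li i)
    (hfholder : ∀ x y, ‖f' x - f' y‖ ≤ L * ‖x - y‖ ^ κ)
    (hcholder : ∀ i x y, ‖c' i x - c' i y‖ ≤ Li i * ‖x - y‖ ^ κ)
    -- the optimal solution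
    (xstar : EuclideanSpace ℝ (Fin n)) (hxstarX : xstar ∈ X)
    (hxstarfeas : ∀ i, c i xstar ≤ 0)
    (hxstaropt : ∀ z ∈ X, (∀ i, c i z ≤ 0) → f xstar + r xstar ≤ f z + r z)
    -- the feasible base point
    (x : EuclideanSpace ℝ (Fin n)) (hxX : x ∈ X) (hxfeas : ∀ i, c i x ≤ 0)
    -- KKT conditions of the GHMA subproblem (CP_x)
    (zstar : EuclideanSpace ℝ (Fin n)) (hzX : zstar ∈ X)
    (μ : Fin m → ℝ) (hμ : ∀ i, 0 ≤ μ i)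
    (l : EuclideanSpace ℝ (Fin n)) (hl : l ∈ subgrad r zstar)
    (hstat : ∀ z ∈ X, 0 ≤
      ⟪f' x + (L * ‖zstar - x‖ ^ (κ - 1)) • (zstar - x) +
        (∑ i, μ i • (c' i x + (Li i * ‖zstar - x‖ ^ (κ - 1)) • (zstar - x))) + l,
        z - zstar⟫)
    (hconstr : ∀ i, c i x + ⟪c' i x, zstar - x⟫ +
      (Li i / (κ + 1)) * ‖zstar - x‖ ^ (κ + 1) ≤ 0)
    (hcomp : ∀ i, μ i * (c i x + ⟪c' i x, zstar - x⟫ +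
      (Li i / (κ + 1)) * ‖zstar - x‖ ^ (κ + 1)) = 0) :
    ((f zstar + r zstar) - (f xstar + r xstar) ≤
      ((L + ∑ i, μ i * Li i) / 2) * ‖zstar - x‖ ^ (κ - 1) *
        (((1 - κ) / (1 + κ)) * ‖zstar - x‖ ^ (2 : ℝ) +
          ‖x - xstar‖ ^ (2 : ℝ) - ‖zstar - xstar‖ ^ (2 : ℝ))) ∧
    (∀ C₁ : ℝ, 0 < C₁ → ‖x - xstar‖ ≤ C₁ → ‖zstar - xstar‖ ≤ C₁ →
      (f zstar + r zstar) - (f xstar + r xstar) ≤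
        (L + ∑ i, μ i * Li i) * C₁ * ‖zstar - x‖ ^ κ) := by
  set d := zstar - x with hd
  set τ := ‖d‖ ^ (κ - 1) with hτdef
  set SL := ∑ i, μ i * Li i with hSL
  set P := ‖d‖ ^ (κ + 1) with hP
  set w := xstar - zstar with hw
  have hκ1' : (0:ℝ) < κ + 1 := by linarith
  have hne1 : (1:ℝ) + κ ≠ 0 := by linarith
  have hne2 : κ + (1:ℝ) ≠ 0 := by linarith
  have hSLnn : 0 ≤ SL := Finset.sum_nonneg fun i _ => mul_nonneg (hμ i) (hLi i).le
  have hMnn : (0:ℝ) ≤ L + SL := by linarith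
  have hτnn : 0 ≤ τ := Real.rpow_nonneg (norm_nonneg _) _
  have hPdef : τ * ‖d‖ ^ 2 = P := by
    by_cases h0 : ‖d‖ = 0
    · rw [hP, h0, Real.zero_rpow (ne_of_gt hκ1'), hτdef, h0]; ring
    · rw [hP, hτdef, show κ + 1 = (κ - 1) + 2 by ring,
        Real.rpow_add (lt_of_le_of_ne (norm_nonneg _) (Ne.symm h0)), Real.rpow_two]
  have hQ : τ * ‖d‖ = ‖d‖ ^ κ := by
    by_cases h0 : ‖d‖ = 0
    · rw [h0, Real.zero_rpow (ne_of_gt hκ0), hτdef, h0]; ring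
    · rw [hτdef, ← Real.rpow_add_one h0]
      congr 1; ring
  set A := (⟪f' x, d⟫ : ℝ) with hA
  set B := (⟪f' x, xstar - x⟫ : ℝ) with hB
  set Cl := (⟪l, w⟫ : ℝ) with hCl
  set D0 := (⟪d, w⟫ : ℝ) with hD0
  -- inner product decompositions
  have hwd : w = (xstar - x) - d := by rw [hw, hd]; abel
  have hfw : (⟪f' x, w⟫ : ℝ) = B - A := by
    rw [hB, hA, ← inner_sub_right]; congr 1
  have hcw : ∀ i : Fin m, (⟪c' i x, w⟫ : ℝ) = ⟪c' i x, xstar - x⟫ - ⟪c' i x, d⟫ := by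
    intro i; rw [← inner_sub_right]; congr 1
  -- descent lemma for f
  have h1 : f zstar ≤ f x + A + L / (κ + 1) * P := by
    have h := holder_descent hf hκ0 hL.le hfholder x zstar
    rw [← hd, ← hP, ← hA] at h
    exact h
  -- convexity of f
  have h2 : f x + B ≤ f xstar := by
    have h := convex_grad_ineq hfconv (hf x) (y := xstar)
    rw [← hB] at h
    exact h
  -- subgradient of r
  have h4 : r zstar + Cl ≤ r xstar := by
    have h := hl xstar
    rw [← hw, ← hCl] at h
    exact h
  -- stationarity expanded
  have hst' : 0 ≤ (B - A) + L * (τ * D0) + ((∑ i, μ i * ⟪c' i x, w⟫) + SL * (τ * D0)) + Cl := by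
    have hst := hstat xstar hxstarX
    rw [← hw] at hst
    refine le_of_le_of_eq hst ?_
    rw [inner_add_left, inner_add_left, inner_add_left, real_inner_smul_left, sum_inner]
    simp only [inner_add_left, real_inner_smul_left]
    rw [hfw, ← hD0]
    rw [Finset.sum_congr rfl (fun i _ => by
      rw [mul_add] : ∀ i ∈ Finset.univ, μ i * (⟪c' i x, w⟫ + Li i * τ * D0)
        = μ i * ⟪c' i x, w⟫ + μ i * (Li i * τ * D0))]
    rw [Finset.sum_add_distrib]
    rw [Finset.sum_congr rfl (fun i _ => by
      ring : ∀ i ∈ Finset.univ, μ i * (Li i * τ * D0) = μ i * Li i * (τ * D0))]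
    rw [← Finset.sum_mul, ← hSL]
    ring
  -- per-coordinate multiplier bound
  have hmc : ∀ i : Fin m, μ i * ⟪c' i x, w⟫ ≤ μ i * Li i / (κ + 1) * P := by
    intro i
    have e1 : μ i * ⟪c' i x, d⟫ = -(μ i * c i x) - μ i * (Li i / (κ + 1)) * P := by
      linear_combination hcomp i
    have h3i := convex_grad_ineq (hcconv i) (hc i x) (y := xstar)
    have h5 : μ i * (c i x + ⟪c' i x, xstar - x⟫) ≤ μ i * c i xstar :=
      mul_le_mul_of_nonneg_left (by linarith) (hμ i)
    have h6 : μ i * c i xstar ≤ 0 := mul_nonpos_iff.mpr (Or.inl ⟨hμ i, hxstarfeas i⟩)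
    have e2 : μ i * ⟪c' i x, xstar - x⟫ ≤ -(μ i * c i x) := by nlinarith [h5, h6]
    have e3 : μ i * (Li i / (κ + 1)) * P = μ i * Li i / (κ + 1) * P := by ring
    have e4 : μ i * ⟪c' i x, w⟫ = μ i * ⟪c' i x, xstar - x⟫ - μ i * ⟪c' i x, d⟫ := by
      rw [hcw i]; ring
    linarith
  have hsum : (∑ i, μ i * ⟪c' i x, w⟫) ≤ SL / (κ + 1) * P := by
    calc (∑ i, μ i * ⟪c' i x, w⟫) ≤ ∑ i, μ i * Li i / (κ + 1) * P :=
          Finset.sum_le_sum fun i _ => hmc i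
      _ = SL / (κ + 1) * P := by rw [← Finset.sum_mul, ← Finset.sum_div, ← hSL]
  -- the master bound
  have hstar : (f zstar + r zstar) - (f xstar + r xstar)
      ≤ (L + SL) * (τ * D0) + (L + SL) / (κ + 1) * P := by
    have hdiv : (L + SL) / (κ + 1) * P = L / (κ + 1) * P + SL / (κ + 1) * P := by ring
    have hdistr : (L + SL) * (τ * D0) = L * (τ * D0) + SL * (τ * D0) := by ring
    linarith
  constructor
  · -- part (a)
    have hxx : x - xstar = (zstar - xstar) - d := by rw [hd]; abel
    have hD0' : D0 = -⟪zstar - xstar, d⟫ := by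
      rw [hD0, hw, show xstar - zstar = -(zstar - xstar) from by abel, inner_neg_right,
        real_inner_comm]
    have hIdent : ‖x - xstar‖ ^ 2 - ‖zstar - xstar‖ ^ 2 - ‖d‖ ^ 2 = 2 * D0 := by
      rw [hxx, norm_sub_sq_real, hD0']; ring
    have h2D : D0 = (‖x - xstar‖ ^ 2 - ‖zstar - xstar‖ ^ 2 - ‖d‖ ^ 2) / 2 := by linarith
    simp only [Real.rpow_two]
    refine hstar.trans (le_of_eq ?_)
    rw [← hPdef, h2D]
    field_simp
    ring
  · -- part (b)
    intro C₁ hC₁ hb1 hb2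
    have hE : (⟪d, xstar - x⟫ : ℝ) ≤ ‖d‖ * C₁ := by
      calc (⟪d, xstar - x⟫ : ℝ) ≤ ‖d‖ * ‖xstar - x‖ := real_inner_le_norm _ _
        _ ≤ ‖d‖ * C₁ := by
            have hxs : ‖xstar - x‖ ≤ C₁ := by rw [norm_sub_rev xstar x]; exact hb1
            exact mul_le_mul_of_nonneg_left hxs (norm_nonneg _)
    have hdw : D0 = ⟪d, xstar - x⟫ - ‖d‖ ^ 2 := by
      rw [hD0, hwd, inner_sub_right, real_inner_self_eq_norm_sq]
    have c1 : (L + SL) / (κ + 1) * (τ * ‖d‖ ^ 2) ≤ (L + SL) * (τ * ‖d‖ ^ 2) :=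
      mul_le_mul_of_nonneg_right (div_le_self hMnn (by linarith)) (by positivity)
    have c2 : (L + SL) * (τ * D0)
        = (L + SL) * (τ * ⟪d, xstar - x⟫) - (L + SL) * (τ * ‖d‖ ^ 2) := by rw [hdw]; ring
    have c3 : (L + SL) * (τ * ⟪d, xstar - x⟫) ≤ (L + SL) * (τ * (‖d‖ * C₁)) :=
      mul_le_mul_of_nonneg_left (mul_le_mul_of_nonneg_left hE hτnn) hMnn
    have c4 : (L + SL) * (τ * (‖d‖ * C₁)) = (L + SL) * C₁ * ‖d‖ ^ κ := by rw [← hQ]; ring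
    rw [← hPdef] at hstar
    linarith
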